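/- Let G be the symmetric bilinear form on V ⊕ V given by G((X₁,X₂),(Y₁,Y₂)) = A·g(X₁,Y₁) + a₂(g(X₁,Y₂)+g(X₂,Y₁)), with a₂ ≠ 0 and A < 0. For η ∈ V set S = (A/(√3·√|A|·a₂))(0,η) + (1/(√3·√|A|))(η,0) and T = (2A/(√3·√|A|·a₂))(0,η) − (1/(√3·√|A|))(η,0). Then G(S,S') = −g(η,η'), G(S,T') = 0, and G(T,T') = g(η,η'). -/

import Mathlib

open RealInnerProductSpace

/-- Case 5 of the orthonormal normal frame construction: `a₁ = 0`, `a₂ ≠ 0`,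
`A < 0`. -/
theorem normal_frame_case5
    {V : Type*} [NormedAddCommGroup V] [InnerProductSpace ℝ V]
    (A a₂ : ℝ) (ha₂ : a₂ ≠ 0) (hA : A < 0)
    (G : V × V → V × V → ℝ)
    (hG : ∀ X Y : V × V, G X Y = A * ⟪X.1, Y.1⟫ + a₂ * (⟪X.1, Y.2⟫ + ⟪X.2, Y.1⟫))
    (η η' : V)
    (S S' T T' : V × V)
    (hS : S = (A / (Real.sqrt 3 * Real.sqrt |A| * a₂)) • ((0, η) : V × V)
            + (1 / (Real.sqrt 3 * Real.sqrt |A|)) • ((η, 0) : V × V))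
    (hS' : S' = (A / (Real.sqrt 3 * Real.sqrt |A| * a₂)) • ((0, η') : V × V)
            + (1 / (Real.sqrt 3 * Real.sqrt |A|)) • ((η', 0) : V × V))
    (hT : T = (2 * A / (Real.sqrt 3 * Real.sqrt |A| * a₂)) • ((0, η) : V × V)
            - (1 / (Real.sqrt 3 * Real.sqrt |A|)) • ((η, 0) : V × V))
    (hT' : T' = (2 * A / (Real.sqrt 3 * Real.sqrt |A| * a₂)) • ((0, η') : V × V)
            - (1 / (Real.sqrt 3 * Real.sqrt |A|)) • ((η', 0) : V × V)) :
    G S S' = -⟪η, η'⟫ ∧ G S T' = 0 ∧ G T T' = ⟪η, η'⟫ := by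
  have h3 : Real.sqrt 3 ≠ 0 := by positivity
  have hAabs : |A| = -A := abs_of_neg hA
  have hAne : A ≠ 0 := ne_of_lt hA
  have hs : Real.sqrt |A| * Real.sqrt |A| = -A := by
    rw [Real.mul_self_sqrt (abs_nonneg A), hAabs]
  have hsne : Real.sqrt |A| ≠ 0 :=
    ne_of_gt (Real.sqrt_pos.mpr (abs_pos.mpr hAne))
  have h33 : Real.sqrt 3 * Real.sqrt 3 = 3 := Real.mul_self_sqrt (by norm_num)
  subst hS hS' hT hT'
  simp only [hG, Prod.smul_fst, Prod.smul_snd, Prod.fst_add, Prod.snd_add,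
    Prod.fst_sub, Prod.snd_sub, smul_zero, add_zero, zero_add,
    inner_smul_left, inner_smul_right, inner_add_left, inner_add_right,
    inner_sub_left, inner_sub_right, inner_zero_left, inner_zero_right,
    RCLike.conj_to_real]
  have hu : (Real.sqrt 3 * Real.sqrt |A|) * (Real.sqrt 3 * Real.sqrt |A|) = -(3 * A) := by
    calc (Real.sqrt 3 * Real.sqrt |A|) * (Real.sqrt 3 * Real.sqrt |A|)
        = (Real.sqrt 3 * Real.sqrt 3) * (Real.sqrt |A| * Real.sqrt |A|) := by ring
      _ = -(3 * A) := by rw [h33, hs]; ring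
  refine ⟨?_, ?_, ?_⟩
  · field_simp
    linear_combination ⟪η, η'⟫ * hu
  · field_simp
    ring
  · field_simp
    linear_combination (-⟪η, η'⟫) * hu
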